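/- arXiv:2404.19332 — 7 statements merged into one kernel-verified Lean document; each statement's English description precedes it below -/
import Mathlib

section
/- For every natural number n ≥ 2, φ(n)³ + ψ(n)³ + σ(n)³ ≥ 3n³ + 3n² + 9n + 1. -/
/-- The Dedekind psi function: ψ(p^a) = p^(a-1)(p+1), ψ(1) = 1, multiplicative. -/
def dpsi (n : ℕ) : ℕ := ∏ p ∈ n.primeFactors, p ^ (n.factorization p - 1) * (p + 1)

/-- Sum of divisors function. -/
def sigma1 (n : ℕ) : ℕ := ArithmeticFunction.sigma 1 n

lemma n_eq_prod (n : ℕ) (hn : n ≠ 0) :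
    n = ∏ p ∈ n.primeFactors, p ^ n.factorization p := by
  conv_lhs => rw [← Nat.factorization_prod_pow_eq_self hn]
  rfl

lemma dpsi_ge (n : ℕ) (hn : 2 ≤ n) : n + 1 ≤ dpsi n := by
  have hn0 : n ≠ 0 := by omega
  have hne : n.primeFactors.Nonempty := Nat.nonempty_primeFactors.mpr (by omega)
  have hlt : n < dpsi n := by
    conv_lhs => rw [n_eq_prod n hn0]
    unfold dpsi
    apply Finset.prod_lt_prod_of_nonempty _ _ hne
    · intro p hp
      exact pow_pos (Nat.prime_of_mem_primeFactors hp).pos _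
    · intro p hp
      have hp2 : 2 ≤ p := (Nat.prime_of_mem_primeFactors hp).two_le
      have hk : 1 ≤ n.factorization p := (Nat.prime_of_mem_primeFactors hp).factorization_pos_of_dvd hn0 (Nat.dvd_of_mem_primeFactors hp)
      calc p ^ n.factorization p = p ^ (n.factorization p - 1) * p ^ 1 := by
            rw [← pow_add]; congr 1; omega
        _ < p ^ (n.factorization p - 1) * (p + 1) := by
            have hpos := pow_pos (show 0 < p by omega) (n.factorization p - 1)
            have : p ^ 1 = p := pow_one p
            rw [this]
            exact Nat.mul_lt_mul_of_le_of_lt le_rfl (by omega) hpos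
  omega

lemma sigma1_ge (n : ℕ) (hn : 2 ≤ n) : n + 1 ≤ sigma1 n := by
  unfold sigma1
  rw [ArithmeticFunction.sigma_one_apply]
  have h1 : 1 ∈ n.divisors := Nat.one_mem_divisors.mpr (by omega)
  have hnv : n ∈ n.divisors.erase 1 := by
    simp [Nat.mem_divisors]; omega
  have hb : (1:ℕ) + ∑ d ∈ n.divisors.erase 1, d = ∑ d ∈ n.divisors, d := by
    simpa using Finset.add_sum_erase n.divisors (fun d => d) h1
  have hs : n ≤ ∑ d ∈ n.divisors.erase 1, d := by
    simpa using Finset.single_le_sum (f := fun d => d) (fun d _ => Nat.zero_le d) hnv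
  omega

lemma totient_add_sigma (n : ℕ) (hn : 2 ≤ n) : 2 * n ≤ n.totient + sigma1 n := by
  have hnd : n ∈ n.divisors := Nat.mem_divisors_self n (by omega)
  have hsum : ∑ d ∈ n.divisors.erase n, Nat.totient d + Nat.totient n = n := by
    have := Nat.sum_totient n
    rw [← Finset.add_sum_erase _ _ hnd] at this
    omega
  have hle : ∑ d ∈ n.divisors.erase n, Nat.totient d ≤ ∑ d ∈ n.divisors.erase n, d :=
    Finset.sum_le_sum fun d _ => Nat.totient_le d
  have hsig : ∑ d ∈ n.divisors.erase n, d + n = sigma1 n := by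
    unfold sigma1
    rw [ArithmeticFunction.sigma_one_apply, ← Finset.add_sum_erase _ _ hnd]
    omega
  omega

theorem stmt0 (n : ℕ) (hn : 2 ≤ n) :
    n.totient ^ 3 + dpsi n ^ 3 + sigma1 n ^ 3 ≥ 3 * n ^ 3 + 3 * n ^ 2 + 9 * n + 1 := by
  have h1 := dpsi_ge n hn
  have h2 := sigma1_ge n hn
  have h3 := totient_add_sigma n hn
  have h4 : n.totient < n := Nat.totient_lt n (by omega)
  zify at *
  set a := (n.totient : ℤ)
  set b := (dpsi n : ℤ)
  set c := (sigma1 n : ℤ)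
  have ha0 : 0 ≤ a := Int.natCast_nonneg _
  have hb3 : ((n : ℤ) + 1) ^ 3 ≤ b ^ 3 := pow_le_pow_left₀ (by linarith) h1 3
  have hc3 : ((2 * n : ℤ) - a) ^ 3 ≤ c ^ 3 := pow_le_pow_left₀ (by linarith) (by linarith) 3
  have key : (2 * (n:ℤ)^3 + 6 * n) ≤ a ^ 3 + (2 * n - a) ^ 3 := by
    nlinarith [sq_nonneg ((n:ℤ) - a - 1), sq_nonneg ((n:ℤ) - a)]
  nlinarith
end

section
/- For every natural number n ≥ 2, φ(n)⁴ + ψ(n)⁴ + σ(n)⁴ ≥ 3n⁴ + 4n³ + 18n² + 4n + 3. -/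
open Finset

lemma prod_key (s : Finset ℕ) (hs : ∀ p ∈ s, 2 ≤ p) :
    (∏ p ∈ s, (p - 1)) ≤ (∏ p ∈ s, (p + 1)) ∧
    2 * ∏ p ∈ s, p ≤ (∏ p ∈ s, (p - 1)) + ∏ p ∈ s, (p + 1) := by
  induction s using Finset.induction_on with
  | empty => simp
  | @insert p s hx ih =>
    have hp : 2 ≤ p := hs p (mem_insert_self _ _)
    have hs' : ∀ q ∈ s, 2 ≤ q := fun q hq => hs q (mem_insert_of_mem hq)
    obtain ⟨h1, h2⟩ := ih hs'
    rw [prod_insert hx, prod_insert hx, prod_insert hx]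
    refine ⟨Nat.mul_le_mul (by omega) h1, ?_⟩
    set A := ∏ q ∈ s, (q - 1)
    set B := ∏ q ∈ s, (q + 1)
    set C := ∏ q ∈ s, q
    calc 2 * (p * C) = p * (2 * C) := by ring
      _ ≤ p * (A + B) := Nat.mul_le_mul_left p h2
      _ ≤ p * (A + B) + (B - A) := Nat.le_add_right _ _
      _ = (p - 1) * A + (p + 1) * B := by
          have h3 : 1 ≤ p := by omega
          zify [h1, h3]; ring

lemma prod_succ_ge (s : Finset ℕ) (hne : s.Nonempty) :
    (∏ p ∈ s, p) + 1 ≤ ∏ p ∈ s, (p + 1) := by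
  induction hne using Finset.Nonempty.cons_induction with
  | singleton p => simp
  | cons p s hx hne ih =>
    rw [prod_cons, prod_cons]
    calc p * ∏ q ∈ s, q + 1 ≤ p * ∏ q ∈ s, q + (p + (∏ q ∈ s, q) + 1) := by omega
      _ = (p + 1) * ((∏ q ∈ s, q) + 1) := by ring
      _ ≤ (p + 1) * ∏ q ∈ s, (q + 1) := Nat.mul_le_mul_left _ ih

lemma int_ineq (a b c n : ℤ) (ha : 0 ≤ a) (hab : 2*n ≤ a+b) (hb : n+1 ≤ b)
    (hc : n+1 ≤ c) (hn : 2 ≤ n) :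
    3*n^4+4*n^3+18*n^2+4*n+3 ≤ a^4+b^4+c^4 := by
  have hn0 : (0:ℤ) ≤ n + 1 := by omega
  have hc4 : (n+1)^4 ≤ c^4 := pow_le_pow_left₀ hn0 hc 4
  rcases le_or_gt (n-1) a with h | h
  · have ha4 : (n-1)^4 ≤ a^4 := pow_le_pow_left₀ (by omega) h 4
    have hb4 : (n+1)^4 ≤ b^4 := pow_le_pow_left₀ hn0 hb 4
    nlinarith
  · have hb' : 2*n - a ≤ b := by omega
    have hb4 : (2*n-a)^4 ≤ b^4 := pow_le_pow_left₀ (by omega) hb' 4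
    have hd : 0 ≤ n - 1 - a := by omega
    nlinarith [mul_nonneg hd (by omega : (0:ℤ) ≤ n-1-a),
      mul_nonneg (mul_nonneg hd hd) hd,
      mul_nonneg (mul_nonneg (mul_nonneg hd hd) hd) hd,
      mul_nonneg hd ha, mul_nonneg (mul_nonneg hd hd) ha,
      sq_nonneg n, sq_nonneg a, mul_nonneg hd (by omega : (0:ℤ) ≤ n)]

theorem stmt1 (n : ℕ) (hn : 2 ≤ n) :
    n.totient ^ 4 + dpsi n ^ 4 + sigma1 n ^ 4 ≥ 3 * n ^ 4 + 4 * n ^ 3 + 18 * n ^ 2 + 4 * n + 3 := by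
  have hn0 : n ≠ 0 := by omega
  set s := n.primeFactors with hs
  have hsp : ∀ p ∈ s, 2 ≤ p := fun p hp => (Nat.prime_of_mem_primeFactors hp).two_le
  set X : ℕ := ∏ p ∈ s, p ^ (n.factorization p - 1) with hX
  -- totient as product
  have htot : n.totient = X * ∏ p ∈ s, (p - 1) := by
    rw [Nat.totient_eq_prod_factorization hn0, Finsupp.prod, Nat.support_factorization,
      ← Finset.prod_mul_distrib]
  have hpsi : dpsi n = X * ∏ p ∈ s, (p + 1) := by
    rw [dpsi, ← Finset.prod_mul_distrib]
  have hnn : n = X * ∏ p ∈ s, p := by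
    conv_lhs => rw [← Nat.factorization_prod_pow_eq_self hn0]
    rw [Finsupp.prod, Nat.support_factorization, ← Finset.prod_mul_distrib]
    apply Finset.prod_congr rfl
    intro p hp
    have h1 : 1 ≤ n.factorization p :=
      Nat.Prime.factorization_pos_of_dvd (Nat.prime_of_mem_primeFactors hp) hn0
        (Nat.dvd_of_mem_primeFactors hp)
    rw [← pow_succ]
    congr 1
    omega
  have hX1 : 1 ≤ X := by
    have : X ≠ 0 := by
      intro h
      rw [h, zero_mul] at hnn
      omega
    omega
  obtain ⟨h1, h2⟩ := prod_key s hsp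
  have hne : s.Nonempty := Nat.nonempty_primeFactors.mpr (by omega)
  have h3 := prod_succ_ge s hne
  -- key estimates
  have hab : 2 * n ≤ n.totient + dpsi n := by
    rw [htot, hpsi, hnn]
    have := Nat.mul_le_mul_left (X) (h2)
    nlinarith [Nat.mul_le_mul_left X h2]
  have hb : n + 1 ≤ dpsi n := by
    rw [hpsi, hnn]
    calc X * (∏ p ∈ s, p) + 1 ≤ X * ((∏ p ∈ s, p) + 1) := by nlinarith
      _ ≤ X * ∏ p ∈ s, (p + 1) := Nat.mul_le_mul_left _ h3
  have hc : n + 1 ≤ sigma1 n := by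
    rw [sigma1, ArithmeticFunction.sigma_one_apply]
    have hsub : ({1, n} : Finset ℕ) ⊆ n.divisors := by
      intro d hd
      simp only [Finset.mem_insert, Finset.mem_singleton] at hd
      rcases hd with rfl | rfl
      · exact Nat.one_mem_divisors.mpr hn0
      · exact Nat.mem_divisors_self _ hn0
    calc n + 1 = ∑ d ∈ ({1, n} : Finset ℕ), d := by
          rw [Finset.sum_pair (by omega : 1 ≠ n)]; omega
      _ ≤ ∑ d ∈ n.divisors, d := Finset.sum_le_sum_of_subset hsub
  have key := int_ineq (n.totient : ℤ) (dpsi n) (sigma1 n) n (by positivity)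
    (by exact_mod_cast hab) (by exact_mod_cast hb) (by exact_mod_cast hc) (by exact_mod_cast hn)
  zify
  linarith
end

section
/- For every natural number n ≥ 2, φ(n)²ψ(n)² + φ(n)²σ(n)² + σ(n)²ψ(n)² ≥ 3n⁴ + 4n³ + 2n² + 4n + 3. -/
lemma dpsi_prime_pow {p k : ℕ} (hp : p.Prime) (hk : k ≠ 0) :
    dpsi (p ^ k) = p ^ (k - 1) * (p + 1) := by
  rw [dpsi, Nat.primeFactors_prime_pow hk hp, Finset.prod_singleton,
    hp.factorization_pow, Finsupp.single_eq_same]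

lemma factorization_eq_zero_of_coprime_mem {a b p : ℕ} (hab : Nat.Coprime a b)
    (hp : p ∈ a.primeFactors) : b.factorization p = 0 := by
  rw [← Finsupp.notMem_support_iff, Nat.support_factorization]
  intro h
  have h1 : p ∣ Nat.gcd a b :=
    Nat.dvd_gcd (Nat.dvd_of_mem_primeFactors hp) (Nat.dvd_of_mem_primeFactors h)
  rw [hab] at h1
  exact (Nat.prime_of_mem_primeFactors hp).one_lt.ne' (Nat.dvd_one.mp h1)

lemma dpsi_mul {a b : ℕ} (hab : Nat.Coprime a b) (ha : a ≠ 0) (hb : b ≠ 0) :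
    dpsi (a * b) = dpsi a * dpsi b := by
  unfold dpsi
  rw [Nat.primeFactors_mul ha hb, Finset.prod_union hab.disjoint_primeFactors]
  congr 1
  · exact Finset.prod_congr rfl fun p hp => by
      rw [Nat.factorization_mul ha hb, Finsupp.add_apply,
        factorization_eq_zero_of_coprime_mem hab hp, add_zero]
  · exact Finset.prod_congr rfl fun p hp => by
      rw [Nat.factorization_mul ha hb, Finsupp.add_apply,
        factorization_eq_zero_of_coprime_mem hab.symm hp, zero_add]

lemma le_dpsi {n : ℕ} (hn : n ≠ 0) : n ≤ dpsi n := by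
  conv_lhs => rw [← Nat.factorization_prod_pow_eq_self hn]
  refine Finset.prod_le_prod' (N := ℕ) fun p hp => ?_
  have ha : 1 ≤ n.factorization p :=
    Nat.one_le_iff_ne_zero.mpr (Finsupp.mem_support_iff.mp hp)
  calc p ^ n.factorization p = p ^ (n.factorization p - 1) * p := by
        rw [← pow_succ]; congr 1; omega
    _ ≤ p ^ (n.factorization p - 1) * (p + 1) := Nat.mul_le_mul_left _ (Nat.le_succ p)

lemma dpsi_le_sigma1 {n : ℕ} (hn : n ≠ 0) : dpsi n ≤ sigma1 n := by
  rw [sigma1, ArithmeticFunction.sigma_one_apply, Nat.sum_divisors hn, dpsi]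
  refine Finset.prod_le_prod' (N := ℕ) fun p hp => ?_
  set a := n.factorization p with hadef
  have ha : 1 ≤ a := Nat.one_le_iff_ne_zero.mpr (Finsupp.mem_support_iff.mp hp)
  have hsub : ({a - 1, a} : Finset ℕ) ⊆ Finset.range (a + 1) := by
    intro x hx; simp only [Finset.mem_insert, Finset.mem_singleton] at hx
    rcases hx with h | h <;> simp [h] <;> omega
  calc p ^ (a - 1) * (p + 1) = p ^ (a - 1) + p ^ a := by
        have h1 : a = (a - 1) + 1 := by omega
        rw [h1, Nat.add_sub_cancel, pow_succ]; ring
    _ = ∑ i ∈ ({a - 1, a} : Finset ℕ), p ^ i := (Finset.sum_pair (by omega)).symm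
    _ ≤ ∑ i ∈ Finset.range (a + 1), p ^ i := Finset.sum_le_sum_of_subset hsub

lemma sigma1_mul {a b : ℕ} (hab : Nat.Coprime a b) :
    sigma1 (a * b) = sigma1 a * sigma1 b :=
  ArithmeticFunction.isMultiplicative_sigma.map_mul_of_coprime hab

lemma cheb {x1 x2 x3 y1 y2 y3 : ℕ} (hx1 : x1 ≤ x2) (hx2 : x2 ≤ x3)
    (hy1 : y1 ≤ y2) (hy2 : y2 ≤ y3) :
    (x1 + x2 + x3) * (y1 + y2 + y3) ≤ 3 * (x1 * y1 + x2 * y2 + x3 * y3) := by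
  zify at *
  nlinarith [mul_nonneg (sub_nonneg.2 hx1) (sub_nonneg.2 hy1),
    mul_nonneg (sub_nonneg.2 hx2) (sub_nonneg.2 hy2),
    mul_nonneg (sub_nonneg.2 (hx1.trans hx2)) (sub_nonneg.2 (hy1.trans hy2))]

lemma Rsubmul {m n : ℕ} (hm : 2 ≤ m) (hn : 2 ≤ n) :
    3 * (3 * (m * n) ^ 4 + 4 * (m * n) ^ 3 + 2 * (m * n) ^ 2 + 4 * (m * n) + 3) ≤
      (3 * m ^ 4 + 4 * m ^ 3 + 2 * m ^ 2 + 4 * m + 3) *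
        (3 * n ^ 4 + 4 * n ^ 3 + 2 * n ^ 2 + 4 * n + 3) := by
  have f1 : 2 * (m * n) ^ 3 ≤ m ^ 4 * n ^ 3 := by
    calc 2 * (m * n) ^ 3 = 2 * (m ^ 3 * n ^ 3) := by ring
      _ ≤ m * (m ^ 3 * n ^ 3) := Nat.mul_le_mul_right _ hm
      _ = m ^ 4 * n ^ 3 := by ring
  have f2 : 2 * (m * n) ^ 3 ≤ m ^ 3 * n ^ 4 := by
    calc 2 * (m * n) ^ 3 = 2 * (m ^ 3 * n ^ 3) := by ring
      _ ≤ n * (m ^ 3 * n ^ 3) := Nat.mul_le_mul_right _ hn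
      _ = m ^ 3 * n ^ 4 := by ring
  have hk : 4 ≤ m * n := by calc 4 = 2 * 2 := rfl
                                 _ ≤ m * n := Nat.mul_le_mul hm hn
  have tail : 3 * (3 * (m * n) ^ 4 + 4 * (m * n) ^ 3 + 2 * (m * n) ^ 2 + 4 * (m * n) + 3) ≤
      9 * (m * n) ^ 4 + 64 * (m * n) ^ 3 := by nlinarith [hk]
  have key : 9 * (m * n) ^ 4 + 64 * (m * n) ^ 3 ≤
      (3 * m ^ 4 + 4 * m ^ 3) * (3 * n ^ 4 + 4 * n ^ 3) := by
    have e : (3 * m ^ 4 + 4 * m ^ 3) * (3 * n ^ 4 + 4 * n ^ 3) =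
        9 * (m * n) ^ 4 + 12 * (m ^ 4 * n ^ 3) + 12 * (m ^ 3 * n ^ 4) + 16 * (m * n) ^ 3 := by
      ring
    rw [e]; linarith [f1, f2]
  calc 3 * (3 * (m * n) ^ 4 + 4 * (m * n) ^ 3 + 2 * (m * n) ^ 2 + 4 * (m * n) + 3)
      ≤ (3 * m ^ 4 + 4 * m ^ 3) * (3 * n ^ 4 + 4 * n ^ 3) := tail.trans key
    _ ≤ _ := Nat.mul_le_mul (by omega) (by omega)

lemma prime_pow_case {p k : ℕ} (hp : p.Prime) (hk : 0 < k) :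
    (p ^ k).totient ^ 2 * dpsi (p ^ k) ^ 2 + (p ^ k).totient ^ 2 * sigma1 (p ^ k) ^ 2 +
        sigma1 (p ^ k) ^ 2 * dpsi (p ^ k) ^ 2 ≥
      3 * (p ^ k) ^ 4 + 4 * (p ^ k) ^ 3 + 2 * (p ^ k) ^ 2 + 4 * (p ^ k) + 3 := by
  set t := p ^ (k - 1) with htdef
  set F := (p ^ k).totient with hFdef
  have ht : 1 ≤ t := Nat.one_le_iff_ne_zero.mpr (pow_ne_zero _ hp.pos.ne')
  have hq : t * p = p ^ k := by
    rw [htdef, ← pow_succ]; congr 1; omega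
  have hF : F + t = p ^ k := by
    rw [hFdef, Nat.totient_prime_pow hp hk, ← htdef]
    have hup : (p - 1) + 1 = p := by have := hp.two_le; omega
    calc t * (p - 1) + t = t * ((p - 1) + 1) := by ring
      _ = t * p := by rw [hup]
      _ = p ^ k := hq
  have hψ : dpsi (p ^ k) = F + 2 * t := by
    rw [dpsi_prime_pow hp hk.ne', ← htdef]
    have h1 : t * (p + 1) = t * p + t := by ring
    rw [h1, hq, ← hF]; ring
  have hσ' : F + 2 * t ≤ sigma1 (p ^ k) := hψ ▸ dpsi_le_sigma1 (pow_ne_zero _ hp.pos.ne')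
  set σ := sigma1 (p ^ k) with hσdef
  have hσ : F + 2 * t ≤ σ := hσ'
  rw [hψ, ← hF]
  -- key polynomial inequality
  have l1 : F ^ 2 * (F + 2 * t) ^ 2 ≤ F ^ 2 * σ ^ 2 :=
    Nat.mul_le_mul_left _ (Nat.pow_le_pow_left hσ 2)
  have l2 : (F + 2 * t) ^ 2 * (F + 2 * t) ^ 2 ≤ σ ^ 2 * (F + 2 * t) ^ 2 :=
    Nat.mul_le_mul_right _ (Nat.pow_le_pow_left hσ 2)
  have e : 2 * (F ^ 2 * (F + 2 * t) ^ 2) + (F + 2 * t) ^ 2 * (F + 2 * t) ^ 2 =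
      3 * (F + t) ^ 4 + 4 * (F + t) ^ 3 * t + 2 * (F + t) ^ 2 * t ^ 2 +
        4 * (F + t) * t ^ 3 + 3 * t ^ 4 := by ring
  have key : 3 * (F + t) ^ 4 + 4 * (F + t) ^ 3 + 2 * (F + t) ^ 2 + 4 * (F + t) + 3 ≤
      2 * (F ^ 2 * (F + 2 * t) ^ 2) + (F + 2 * t) ^ 2 * (F + 2 * t) ^ 2 := by
    calc 3 * (F + t) ^ 4 + 4 * (F + t) ^ 3 + 2 * (F + t) ^ 2 + 4 * (F + t) + 3
        ≤ 3 * (F + t) ^ 4 + 4 * (F + t) ^ 3 * t + 2 * (F + t) ^ 2 * t ^ 2 +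
            4 * (F + t) * t ^ 3 + 3 * t ^ 4 := by
          have b1 : 1 ≤ t ^ 2 := Nat.one_le_pow _ _ ht
          have b2 : 1 ≤ t ^ 3 := Nat.one_le_pow _ _ ht
          have b3 : 1 ≤ t ^ 4 := Nat.one_le_pow _ _ ht
          exact add_le_add (add_le_add (add_le_add (add_le_add le_rfl
            (le_mul_of_one_le_right (Nat.zero_le _) ht))
            (le_mul_of_one_le_right (Nat.zero_le _) b1))
            (le_mul_of_one_le_right (Nat.zero_le _) b2))
            (le_mul_of_one_le_right (Nat.zero_le _) b3)
      _ = _ := e.symm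
  calc 3 * (F + t) ^ 4 + 4 * (F + t) ^ 3 + 2 * (F + t) ^ 2 + 4 * (F + t) + 3
      ≤ 2 * (F ^ 2 * (F + 2 * t) ^ 2) + (F + 2 * t) ^ 2 * (F + 2 * t) ^ 2 := key
    _ = F ^ 2 * (F + 2 * t) ^ 2 + F ^ 2 * (F + 2 * t) ^ 2 +
          (F + 2 * t) ^ 2 * (F + 2 * t) ^ 2 := by ring
    _ ≤ F ^ 2 * (F + 2 * t) ^ 2 + F ^ 2 * σ ^ 2 + σ ^ 2 * (F + 2 * t) ^ 2 := by
        exact Nat.add_le_add (Nat.add_le_add_left l1 _) l2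

theorem stmt2 (n : ℕ) (hn : 2 ≤ n) :
    n.totient ^ 2 * dpsi n ^ 2 + n.totient ^ 2 * sigma1 n ^ 2 + sigma1 n ^ 2 * dpsi n ^ 2 ≥
      3 * n ^ 4 + 4 * n ^ 3 + 2 * n ^ 2 + 4 * n + 3 := by
  revert hn
  induction n using Nat.recOnPosPrimePosCoprime with
  | prime_pow p k hpp hk => exact fun _ => prime_pow_case hpp hk
  | zero => intro h; exact absurd h (by norm_num)
  | one => intro h; exact absurd h (by norm_num)
  | coprime a b ha hb hab iha ihb =>
      intro _
      have ha0 : a ≠ 0 := by omega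
      have hb0 : b ≠ 0 := by omega
      have Pa := iha ha
      have Pb := ihb hb
      set Aa := a.totient ^ 2 * dpsi a ^ 2 with hAa
      set Ba := a.totient ^ 2 * sigma1 a ^ 2 with hBa
      set Ca := sigma1 a ^ 2 * dpsi a ^ 2 with hCa
      set Ab := b.totient ^ 2 * dpsi b ^ 2 with hAb
      set Bb := b.totient ^ 2 * sigma1 b ^ 2 with hBb
      set Cb := sigma1 b ^ 2 * dpsi b ^ 2 with hCb
      have orda1 : Aa ≤ Ba := Nat.mul_le_mul_left _ (Nat.pow_le_pow_left (dpsi_le_sigma1 ha0) 2)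
      have orda2 : Ba ≤ Ca := by
        rw [hBa, hCa, mul_comm (sigma1 a ^ 2) (dpsi a ^ 2)]
        exact Nat.mul_le_mul_right _
          (Nat.pow_le_pow_left ((Nat.totient_le a).trans (le_dpsi ha0)) 2)
      have ordb1 : Ab ≤ Bb := Nat.mul_le_mul_left _ (Nat.pow_le_pow_left (dpsi_le_sigma1 hb0) 2)
      have ordb2 : Bb ≤ Cb := by
        rw [hBb, hCb, mul_comm (sigma1 b ^ 2) (dpsi b ^ 2)]
        exact Nat.mul_le_mul_right _
          (Nat.pow_le_pow_left ((Nat.totient_le b).trans (le_dpsi hb0)) 2)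
      have hcheb := cheb orda1 orda2 ordb1 ordb2
      have hmul : (3 * a ^ 4 + 4 * a ^ 3 + 2 * a ^ 2 + 4 * a + 3) *
          (3 * b ^ 4 + 4 * b ^ 3 + 2 * b ^ 2 + 4 * b + 3) ≤
          (Aa + Ba + Ca) * (Ab + Bb + Cb) := Nat.mul_le_mul Pa Pb
      have hR := Rsubmul ha hb
      have h3 : 3 * (3 * (a * b) ^ 4 + 4 * (a * b) ^ 3 + 2 * (a * b) ^ 2 + 4 * (a * b) + 3) ≤
          3 * (Aa * Ab + Ba * Bb + Ca * Cb) := le_trans hR (le_trans hmul hcheb)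
      have hfin : 3 * (a * b) ^ 4 + 4 * (a * b) ^ 3 + 2 * (a * b) ^ 2 + 4 * (a * b) + 3 ≤
          Aa * Ab + Ba * Bb + Ca * Cb := by omega
      calc 3 * (a * b) ^ 4 + 4 * (a * b) ^ 3 + 2 * (a * b) ^ 2 + 4 * (a * b) + 3
          ≤ Aa * Ab + Ba * Bb + Ca * Cb := hfin
        _ = (a * b).totient ^ 2 * dpsi (a * b) ^ 2 + (a * b).totient ^ 2 * sigma1 (a * b) ^ 2 +
              sigma1 (a * b) ^ 2 * dpsi (a * b) ^ 2 := by
            rw [Nat.totient_mul hab, dpsi_mul hab ha0 hb0, sigma1_mul hab, hAa, hBa, hCa,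
              hAb, hBb, hCb]
            ring
end

section
/- For every natural number n ≥ 2, φ(n)²(ψ(n)+σ(n)) + ψ(n)²(φ(n)+σ(n)) + σ(n)²(φ(n)+ψ(n)) ≥ 6n³ + 6n² + 2n + 2. -/
open Finset

lemma key_prod (S : Finset ℕ) (hS : ∀ p ∈ S, 1 ≤ p) :
    (∏ p ∈ S, (p-1)) ≤ (∏ p ∈ S, (p+1)) ∧
    2 * ∏ p ∈ S, p ≤ (∏ p ∈ S, (p-1)) + ∏ p ∈ S, (p+1) := by
  induction S using Finset.cons_induction with
  | empty => simp
  | cons p S hp ih =>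
    obtain ⟨ih1, ih2⟩ := ih (fun q hq => hS q (mem_cons.mpr (Or.inr hq)))
    have hp1 : 1 ≤ p := hS p (mem_cons.mpr (Or.inl rfl))
    rw [prod_cons, prod_cons, prod_cons]
    refine ⟨Nat.mul_le_mul (by omega) ih1, ?_⟩
    have h1 : p * ((∏ q ∈ S, (q-1)) + ∏ q ∈ S, (q+1))
        ≤ (p-1) * ∏ q ∈ S, (q-1) + (p+1) * ∏ q ∈ S, (q+1) := by
      obtain ⟨m, rfl⟩ := Nat.exists_eq_add_of_le hp1
      have e1 : 1 + m - 1 = m := by omega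
      rw [e1]
      nlinarith [ih1]
    calc 2 * (p * ∏ q ∈ S, q) = p * (2 * ∏ q ∈ S, q) := by ring
      _ ≤ p * ((∏ q ∈ S, (q-1)) + ∏ q ∈ S, (q+1)) := Nat.mul_le_mul_left _ ih2
      _ ≤ _ := h1

lemma key_ineq (n a b c : ℤ) (hn : 2 ≤ n) (ha : 1 ≤ a) (ha' : a + 1 ≤ n)
    (hbc : b ≤ c) (hab : 2*n ≤ a + b) :
    a ^ 2 * (b + c) + b ^ 2 * (a + c) + c ^ 2 * (a + b) ≥ 6 * n ^ 3 + 6 * n ^ 2 + 2 * n + 2 := by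
  have hb : n + 1 ≤ b := by linarith
  nlinarith [sq_nonneg (b - c), sq_nonneg (a + b - 2*n), sq_nonneg (b - n - 1),
    mul_pos (by linarith : (0:ℤ) < b) (by linarith : (0:ℤ) < c), sq_nonneg (a - n + 1),
    mul_nonneg (by linarith : (0:ℤ) ≤ c - b) (by linarith : (0:ℤ) ≤ a + b - 2*n)]

theorem stmt3 (n : ℕ) (hn : 2 ≤ n) :
    n.totient ^ 2 * (dpsi n + sigma1 n) + dpsi n ^ 2 * (n.totient + sigma1 n) +
      sigma1 n ^ 2 * (n.totient + dpsi n) ≥ 6 * n ^ 3 + 6 * n ^ 2 + 2 * n + 2 := by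
  have hn0 : n ≠ 0 := by omega
  set S := n.primeFactors with hS
  have hkpos : ∀ p ∈ S, 1 ≤ n.factorization p := fun p hp =>
    (Nat.Prime.factorization_pos_of_dvd (Nat.prime_of_mem_primeFactors hp) hn0
      (Nat.dvd_of_mem_primeFactors hp))
  have hppos : ∀ p ∈ S, 2 ≤ p := fun p hp => (Nat.prime_of_mem_primeFactors hp).two_le
  set M := ∏ p ∈ S, p ^ (n.factorization p - 1) with hM
  -- product formulas
  have hphi : n.totient = M * ∏ p ∈ S, (p - 1) := by
    rw [Nat.totient_eq_prod_factorization hn0, ← Finset.prod_mul_distrib]; rfl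
  have hpsi : dpsi n = M * ∏ p ∈ S, (p + 1) := by
    rw [dpsi, ← Finset.prod_mul_distrib]
  have hnn : n = M * ∏ p ∈ S, p := by
    conv_lhs => rw [← Nat.factorization_prod_pow_eq_self hn0]
    rw [← Finset.prod_mul_distrib]
    refine Finset.prod_congr rfl fun p hp => ?_
    have := hkpos p hp
    rw [← pow_succ]
    congr 1
    omega
  have hsig : sigma1 n = ∏ p ∈ S, ∑ i ∈ range (n.factorization p + 1), p ^ i := by
    rw [sigma1, ArithmeticFunction.sigma_one_apply, Nat.sum_divisors hn0]
  obtain ⟨hk1, hk2⟩ := key_prod S (fun p hp => by have := hppos p hp; omega)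
  -- φ + ψ ≥ 2n
  have hab : 2 * n ≤ n.totient + dpsi n := by
    rw [hphi, hpsi, ← Nat.mul_add]
    calc 2 * n = M * (2 * ∏ p ∈ S, p) := by rw [hnn]; ring
      _ ≤ M * ((∏ p ∈ S, (p - 1)) + ∏ p ∈ S, (p + 1)) := Nat.mul_le_mul_left _ hk2
  -- ψ ≤ σ
  have hbc : dpsi n ≤ sigma1 n := by
    rw [dpsi, hsig]
    refine Finset.prod_le_prod' fun p hp => ?_
    have hk := hkpos p hp
    have hp2 := hppos p hp
    obtain ⟨m, hm⟩ := Nat.exists_eq_add_of_le hk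
    have hm' : n.factorization p = m + 1 := by omega
    rw [hm']
    have e1 : m + 1 - 1 = m := by omega
    rw [e1, Finset.sum_range_succ, Finset.sum_range_succ]
    have : p ^ m * (p + 1) = p ^ (m + 1) + p ^ m := by rw [pow_succ]; ring
    have h0 : 0 ≤ ∑ i ∈ range m, p ^ i := Nat.zero_le _
    omega
  have ha : 1 ≤ n.totient := Nat.totient_pos.mpr (by omega)
  have ha' : n.totient + 1 ≤ n := Nat.totient_lt n (by omega)
  have := key_ineq n (n.totient) (dpsi n) (sigma1 n) (by exact_mod_cast hn)
    (by exact_mod_cast ha) (by exact_mod_cast ha') (by exact_mod_cast hbc)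
    (by exact_mod_cast hab)
  exact_mod_cast this
end

section
/- For every natural number n ≥ 2, φ(n)³(ψ(n)+σ(n)) + ψ(n)³(φ(n)+σ(n)) + σ(n)³(φ(n)+ψ(n)) ≥ 6n⁴ + 8n³ + 12n² + 8n − 2. -/
open Finset

theorem core (n a b c : ℤ) (hn : 2 ≤ n) (ha : 1 ≤ a) (hb : n + 1 ≤ b) (hcb : b ≤ c)
    (hab : 2*n ≤ a + b) :
    6*n^4 + 8*n^3 + 12*n^2 + 8*n - 2 ≤
      a^3*(b+c) + b^3*(a+c) + c^3*(a+b) := by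
  have hb0 : (0:ℤ) ≤ b := by linarith
  have hc0 : (0:ℤ) ≤ c := by linarith
  have ha0 : (0:ℤ) ≤ a := by linarith
  have hbc3 : b^3 ≤ c^3 := pow_le_pow_left₀ hb0 hcb 3
  have hb3 : (0:ℤ) ≤ b^3 := by positivity
  have hc3 : (0:ℤ) ≤ c^3 := by positivity
  rcases le_or_gt b (2*n-1) with hb2 | hb2
  · set a₀ : ℤ := 2*n - b with ha₀
    have ha₀1 : 1 ≤ a₀ := by omega
    have haa : a₀ ≤ a := by omega
    have ha3 : a₀^3 ≤ a^3 := pow_le_pow_left₀ (by linarith) haa 3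
    have ha₀3 : (0:ℤ) ≤ a₀^3 := by positivity
    have step1 : a₀^3*(b+c) + b^3*(a₀+c) + c^3*(a₀+b) ≤
        a^3*(b+c) + b^3*(a+c) + c^3*(a+b) := by
      nlinarith [mul_nonneg (by linarith : (0:ℤ) ≤ a - a₀) (by linarith : (0:ℤ) ≤ b^3 + c^3),
        mul_nonneg (by linarith : (0:ℤ) ≤ a^3 - a₀^3) (by linarith : (0:ℤ) ≤ b + c)]
    have step2 : a₀^3*(b+b) + b^3*(a₀+b) + b^3*(a₀+b) ≤
        a₀^3*(b+c) + b^3*(a₀+c) + c^3*(a₀+b) := by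
      nlinarith [mul_nonneg (by linarith : (0:ℤ) ≤ c - b) (by linarith : (0:ℤ) ≤ a₀^3 + b^3),
        mul_nonneg (by linarith : (0:ℤ) ≤ c^3 - b^3) (by linarith : (0:ℤ) ≤ a₀ + b)]
    have step3 : 6*n^4 + 8*n^3 + 12*n^2 + 8*n - 2 ≤ 2*b*(2*n-b)^3 + 4*n*b^3 := by
      nlinarith [mul_nonneg (by linarith : (0:ℤ) ≤ b - n - 1) (by linarith : (0:ℤ) ≤ 2*n - 1 - b),
        mul_nonneg (mul_nonneg (by linarith : (0:ℤ) ≤ b - n - 1) (by linarith : (0:ℤ) ≤ 2*n - 1 - b)) hb0,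
        mul_nonneg (mul_nonneg (by linarith : (0:ℤ) ≤ b - n - 1) (by linarith : (0:ℤ) ≤ b - n - 1)) hb0,
        sq_nonneg (b - n - 1), mul_nonneg (mul_nonneg (by linarith : (0:ℤ) ≤ b - n - 1) (by linarith : (0:ℤ) ≤ b - n - 1)) (by linarith : (0:ℤ) ≤ n)]
    have heq : a₀^3*(b+b) + b^3*(a₀+b) + b^3*(a₀+b) = 2*b*(2*n-b)^3 + 4*n*b^3 := by
      rw [ha₀]; ring
    linarith [heq ▸ step3]
  · have h4 : (2*n)^4 ≤ b^4 := pow_le_pow_left₀ (by linarith) (by linarith) 4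
    nlinarith [h4, mul_nonneg ha0 hb3, mul_nonneg ha0 hc3,
      mul_nonneg (pow_nonneg ha0 3) (by linarith : (0:ℤ) ≤ b + c),
      mul_le_mul_of_nonneg_left hcb hb3, mul_le_mul_of_nonneg_right hbc3 hb0,
      mul_nonneg (by linarith : (0:ℤ) ≤ n - 2) (pow_nonneg (by linarith : (0:ℤ) ≤ n) 3),
      mul_nonneg (by linarith : (0:ℤ) ≤ n - 2) (pow_nonneg (by linarith : (0:ℤ) ≤ n) 2)]


lemma two_prod_le (s : Finset ℕ) (f g : ℕ → ℕ) (h : ∀ i ∈ s, g i ≤ f i) :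
    2 * ∏ i ∈ s, f i ≤ (∏ i ∈ s, (f i - g i)) + ∏ i ∈ s, (f i + g i) := by
  induction s using Finset.cons_induction with
  | empty => simp
  | cons i s hi ih =>
    have h' : ∀ j ∈ s, g j ≤ f j := fun j hj => h j (mem_cons_of_mem hj)
    have ih' := ih h'
    have hQ : (∏ j ∈ s, (f j - g j)) ≤ ∏ j ∈ s, f j :=
      Finset.prod_le_prod' fun j hj => Nat.sub_le _ _
    have hR : (∏ j ∈ s, f j) ≤ ∏ j ∈ s, (f j + g j) :=
      Finset.prod_le_prod' fun j hj => Nat.le_add_right _ _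
    rw [prod_cons, prod_cons, prod_cons]
    have hgf := h i (mem_cons_self i s)
    zify [hgf]
    have hgfz : (g i : ℤ) ≤ f i := by exact_mod_cast hgf
    have h0 : (0:ℤ) ≤ g i := by positivity
    zify at ih' hQ hR
    nlinarith [mul_le_mul_of_nonneg_left hR h0,
      mul_le_mul_of_nonneg_left ih' (by positivity : (0:ℤ) ≤ (f i : ℤ)),
      mul_le_mul_of_nonneg_left hQ h0]



section facts
variable (n : ℕ) (hn : 2 ≤ n)
include hn

lemma hkpos : ∀ p ∈ n.primeFactors, 1 ≤ n.factorization p := fun p hp =>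
  Nat.Prime.factorization_pos_of_dvd (Nat.prime_of_mem_primeFactors hp) (by omega)
    (Nat.dvd_of_mem_primeFactors hp)

lemma prod_n : (∏ p ∈ n.primeFactors, p ^ n.factorization p) = n := by
  rw [← Nat.prod_factorization_eq_prod_primeFactors]
  exact Nat.factorization_prod_pow_eq_self (by omega)

lemma totient_eq : n.totient = ∏ p ∈ n.primeFactors,
    (p ^ n.factorization p - p ^ (n.factorization p - 1)) := by
  rw [Nat.totient_eq_prod_factorization (by omega : n ≠ 0),
    Nat.prod_factorization_eq_prod_primeFactors]
  refine Finset.prod_congr rfl fun p hp => ?_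
  have hk := hkpos n hn p hp
  have : p ^ (n.factorization p - 1) * p = p ^ n.factorization p := by
    rw [← pow_succ]; congr 1; omega
  rw [Nat.mul_sub, mul_one, this]

lemma dpsi_eq : dpsi n = ∏ p ∈ n.primeFactors,
    (p ^ n.factorization p + p ^ (n.factorization p - 1)) := by
  refine Finset.prod_congr rfl fun p hp => ?_
  have hk := hkpos n hn p hp
  have : p ^ (n.factorization p - 1) * p = p ^ n.factorization p := by
    rw [← pow_succ]; congr 1; omega
  rw [Nat.mul_add, mul_one, this]

lemma tot_add_dpsi : 2 * n ≤ n.totient + dpsi n := by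
  rw [totient_eq n hn, dpsi_eq n hn]
  have := two_prod_le n.primeFactors (fun p => p ^ n.factorization p)
    (fun p => p ^ (n.factorization p - 1)) (fun p hp =>
      Nat.pow_le_pow_right (Nat.prime_of_mem_primeFactors hp).pos (by omega))
  rwa [prod_n n hn] at this

lemma dpsi_gt : n + 1 ≤ dpsi n := by
  rw [dpsi_eq n hn]
  have hlt : n < ∏ p ∈ n.primeFactors,
      (p ^ n.factorization p + p ^ (n.factorization p - 1)) := by
    conv_lhs => rw [← prod_n n hn]
    refine Finset.prod_lt_prod_of_nonempty (fun p hp => ?_) (fun p hp => ?_)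
      (Nat.nonempty_primeFactors.mpr (by omega))
    · exact pow_pos (Nat.prime_of_mem_primeFactors hp).pos _
    · have : 0 < p ^ (n.factorization p - 1) :=
        pow_pos (Nat.prime_of_mem_primeFactors hp).pos _
      omega
  omega

lemma sigma_ge : dpsi n ≤ sigma1 n := by
  rw [sigma1, dpsi_eq n hn,
    ArithmeticFunction.isMultiplicative_sigma.multiplicative_factorization _ (by omega : n ≠ 0),
    Nat.prod_factorization_eq_prod_primeFactors]
  refine Finset.prod_le_prod' fun p hp => ?_
  have hk := hkpos n hn p hp
  rw [ArithmeticFunction.sigma_one_apply_prime_pow (Nat.prime_of_mem_primeFactors hp)]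
  obtain ⟨j, hj⟩ : ∃ j, n.factorization p = j + 1 := ⟨n.factorization p - 1, by omega⟩
  rw [hj]
  rw [Finset.sum_range_succ, Finset.sum_range_succ]
  simp
  omega

end facts


theorem stmt4 (n : ℕ) (hn : 2 ≤ n) :
    n.totient ^ 3 * (dpsi n + sigma1 n) + dpsi n ^ 3 * (n.totient + sigma1 n) +
      sigma1 n ^ 3 * (n.totient + dpsi n) ≥ 6 * n ^ 4 + 8 * n ^ 3 + 12 * n ^ 2 + 8 * n - 2 := by
  have h1 : 1 ≤ n.totient := Nat.totient_pos.mpr (by omega)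
  have h2 : n + 1 ≤ dpsi n := dpsi_gt n hn
  have h3 : dpsi n ≤ sigma1 n := sigma_ge n hn
  have h4 : 2 * n ≤ n.totient + dpsi n := tot_add_dpsi n hn
  rw [ge_iff_le, Nat.sub_le_iff_le_add]
  zify at h1 h2 h3 h4 ⊢
  have := core n (n.totient : ℤ) (dpsi n : ℤ) (sigma1 n : ℤ) (by exact_mod_cast hn)
    h1 h2 h3 h4
  linarith
end

section
/- For distinct primes p and q, 2(p²−1)²(q²−1)² + (p+1)⁴(q+1)⁴ > 3p⁴q⁴ + 4p³q³ + 2p²q² + 4pq + 3. -/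
theorem stmt15 (p q : ℕ) (hp : p.Prime) (hq : q.Prime) (hpq : p ≠ q) :
    2 * ((p ^ 2 - 1) ^ 2 * (q ^ 2 - 1) ^ 2) + (p + 1) ^ 4 * (q + 1) ^ 4 >
      3 * (p ^ 4 * q ^ 4) + 4 * (p ^ 3 * q ^ 3) + 2 * (p ^ 2 * q ^ 2) + 4 * (p * q) + 3 := by
  have hp2 := hp.two_le
  have hq2 := hq.two_le
  have h1 : 1 ≤ p ^ 2 := by nlinarith
  have h2 : 1 ≤ q ^ 2 := by nlinarith
  zify [h1, h2]
  have hx2 : (2:ℤ) ≤ (p:ℤ) := by exact_mod_cast hp2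
  have hy2 : (2:ℤ) ≤ (q:ℤ) := by exact_mod_cast hq2
  set x : ℤ := (p : ℤ)
  set y : ℤ := (q : ℤ)
  have e : 2 * ((x^2-1)^2*(y^2-1)^2) + (x+1)^4*(y+1)^4 =
      3*(x*y+1)^4 + 4*(x+y)*(x*y+1)^3 + 2*(x+y)^2*(x*y+1)^2 + 4*(x+y)^3*(x*y+1) + 3*(x+y)^4 := by
    ring
  have hm : (4:ℤ) ≤ x*y := by nlinarith
  have hu : (4:ℤ) ≤ x+y := by linarith
  have hmpos : (0:ℤ) < x*y + 1 := by linarith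
  have t1 : 3*(x*y+1)^4 > 3*(x^4*y^4) := by nlinarith
  have t2 : 4*(x+y)*(x*y+1)^3 ≥ 4*(x^3*y^3) := by
    have hc : (0:ℤ) < (x*y+1)^3 := by positivity
    calc 4*(x+y)*(x*y+1)^3 ≥ 4*1*(x*y+1)^3 := by nlinarith
      _ ≥ 4*(x*y)^3 := by nlinarith
      _ = 4*(x^3*y^3) := by ring
  have t3 : 2*(x+y)^2*(x*y+1)^2 ≥ 2*(x^2*y^2) := by
    have hc : (0:ℤ) < (x*y+1)^2 := by positivity
    calc 2*(x+y)^2*(x*y+1)^2 ≥ 2*1*(x*y+1)^2 := by nlinarith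
      _ ≥ 2*(x*y)^2 := by nlinarith
      _ = 2*(x^2*y^2) := by ring
  have t4 : 4*(x+y)^3*(x*y+1) ≥ 4*(x*y) := by nlinarith
  have t5 : 3*(x+y)^4 ≥ 3 := by nlinarith
  linarith [e.ge, e.le]
end

section
/- For every natural number n ≥ 2, φ(n)ψ(n)σ(n) ≥ n³ + n² − n − 1. -/
lemma dpsi_pp (p a : ℕ) (hp : p.Prime) (ha : 0 < a) : dpsi (p ^ a) = p ^ (a - 1) * (p + 1) := by
  unfold dpsi
  rw [Nat.primeFactors_prime_pow ha.ne' hp, Finset.prod_singleton,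
    Nat.Prime.factorization_pow hp, Finsupp.single_eq_same]

lemma factz_zero {m n p : ℕ} (h : Nat.Coprime m n) (hpm : p ∈ m.primeFactors) :
    n.factorization p = 0 := by
  have hp := Nat.prime_of_mem_primeFactors hpm
  rw [Nat.factorization_eq_zero_iff]
  right; left
  intro hdvd
  have : p ∣ Nat.gcd m n := Nat.dvd_gcd (Nat.dvd_of_mem_primeFactors hpm) hdvd
  rw [h] at this
  exact hp.one_lt.ne' (Nat.dvd_one.mp this)

lemma dpsi_mul_s18 {m n : ℕ} (hm : m ≠ 0) (hn : n ≠ 0) (h : Nat.Coprime m n) :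
    dpsi (m * n) = dpsi m * dpsi n := by
  unfold dpsi
  rw [Nat.primeFactors_mul hm hn,
    Finset.prod_union (Nat.Coprime.disjoint_primeFactors h)]
  congr 1
  · exact Finset.prod_congr rfl fun p hpm => by
      rw [Nat.factorization_mul hm hn]; simp [factz_zero h hpm]
  · exact Finset.prod_congr rfl fun p hpn => by
      rw [Nat.factorization_mul hm hn]; simp [factz_zero h.symm hpn]

lemma pp_int (p r : ℤ) (hp : 2 ≤ p) (hr : 1 ≤ r) :
    (p*r+1)^2*(p*r-1)*(p-1) ≤ r*(p-1) * (r*(p+1)) * (p^2*r-1) := by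
  have h1 : (0:ℤ) ≤ p^2*r^2 - p*r - r - 1 := by
    nlinarith [mul_le_mul hp hr (by linarith) (by linarith), sq_nonneg (p*r-1)]
  nlinarith [mul_nonneg (mul_nonneg (sub_nonneg.2 hr) h1) (sub_nonneg.2 (by linarith : (1:ℤ) ≤ p))]

lemma supermul_int (a b : ℤ) (ha : 2 ≤ a) (hb : 2 ≤ b) :
    (a*b+1)^2*(a*b-1) ≤ (a+1)^2*(a-1) * ((b+1)^2*(b-1)) := by
  obtain ⟨x, hx, rfl⟩ : ∃ x, 0 ≤ x ∧ a = x + 2 := ⟨a - 2, by omega, by ring⟩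
  obtain ⟨y, hy, rfl⟩ : ∃ y, 0 ≤ y ∧ b = y + 2 := ⟨b - 2, by omega, by ring⟩
  nlinarith [mul_nonneg hx hy, mul_nonneg (mul_nonneg hx hx) hy, mul_nonneg hx (mul_nonneg hy hy),
    mul_nonneg (mul_nonneg hx hx) (mul_nonneg hy hy),
    mul_nonneg (mul_nonneg (mul_nonneg hx hx) hx) hy,
    mul_nonneg hx (mul_nonneg (mul_nonneg hy hy) hy),
    mul_nonneg (mul_nonneg (mul_nonneg hx hx) hx) (mul_nonneg hy hy),
    mul_nonneg (mul_nonneg hx hx) (mul_nonneg (mul_nonneg hy hy) hy),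
    mul_nonneg (mul_nonneg (mul_nonneg hx hx) hx) (mul_nonneg (mul_nonneg hy hy) hy),
    pow_nonneg hx 3, pow_nonneg hy 3, mul_nonneg hx hx, mul_nonneg hy hy]

lemma key : ∀ n : ℕ, 2 ≤ n → (n + 1) ^ 2 * (n - 1) ≤ n.totient * dpsi n * sigma1 n := by
  intro n
  induction n using Nat.recOnPosPrimePosCoprime with
  | zero => omega
  | one => omega
  | prime_pow p a hp ha =>
    intro _
    have hp' : p.Prime := hp
    have hp2 : 2 ≤ p := hp'.two_le
    rw [Nat.totient_prime_pow hp' ha, dpsi_pp p a hp' ha]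
    have hσ : sigma1 (p ^ a) = ∑ k ∈ Finset.range (a + 1), p ^ k :=
      ArithmeticFunction.sigma_one_apply_prime_pow hp'
    rw [hσ]
    have hq1 : 1 ≤ p ^ a := Nat.one_le_pow _ _ (by omega)
    rw [← Nat.cast_le (α := ℤ)]
    push_cast [Nat.cast_sub hq1, Nat.cast_sub (by omega : 1 ≤ p)]
    set P : ℤ := (p : ℤ) with hP
    have hr : (1:ℤ) ≤ P ^ (a - 1) := by
      rw [hP]; exact_mod_cast Nat.one_le_pow (a-1) p (by omega)
    have hpa : P ^ a = P * P ^ (a - 1) := by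
      rw [← pow_succ']; congr 1; omega
    have hpa1 : P ^ (a + 1) = P ^ 2 * P ^ (a - 1) := by
      rw [← pow_add]; congr 1; omega
    have hS : (∑ k ∈ Finset.range (a + 1), P ^ k) * (P - 1) = P ^ (a + 1) - 1 :=
      geom_sum_mul P (a + 1)
    have hP2 : (2:ℤ) ≤ P := by rw [hP]; exact_mod_cast hp2
    have hPpos : (0:ℤ) < P - 1 := by linarith
    apply le_of_mul_le_mul_right _ hPpos
    calc (P ^ a + 1) ^ 2 * (P ^ a - 1) * (P - 1)
        = (P * P ^ (a-1) + 1) ^ 2 * (P * P ^ (a-1) - 1) * (P - 1) := by rw [← hpa]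
      _ ≤ P ^ (a-1) * (P - 1) * (P ^ (a-1) * (P + 1)) * (P ^ 2 * P ^ (a-1) - 1) :=
          pp_int P (P ^ (a-1)) hP2 hr
      _ = P ^ (a-1) * (P - 1) * (P ^ (a-1) * (P + 1)) * ((∑ k ∈ Finset.range (a + 1), P ^ k) * (P - 1)) := by
          rw [hS, hpa1]
      _ = P ^ (a-1) * (P - 1) * (P ^ (a-1) * (P + 1)) * (∑ k ∈ Finset.range (a + 1), P ^ k) * (P - 1) := by
          ring
  | coprime a b ha hb hab iha ihb =>
    intro _
    have h2a : 2 ≤ a := ha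
    have h2b : 2 ≤ b := hb
    have habne : a ≠ 0 := by omega
    have hbbne : b ≠ 0 := by omega
    have hmul : (a * b).totient * dpsi (a * b) * sigma1 (a * b)
        = (a.totient * dpsi a * sigma1 a) * (b.totient * dpsi b * sigma1 b) := by
      unfold sigma1
      rw [Nat.totient_mul hab, dpsi_mul_s18 habne hbbne hab,
        ArithmeticFunction.isMultiplicative_sigma.map_mul_of_coprime hab]
      ring
    rw [hmul]
    have hstep : (a * b + 1) ^ 2 * (a * b - 1)
        ≤ ((a + 1) ^ 2 * (a - 1)) * ((b + 1) ^ 2 * (b - 1)) := by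
      rw [← Nat.cast_le (α := ℤ)]
      push_cast [Nat.cast_sub (by omega : 1 ≤ a), Nat.cast_sub (by omega : 1 ≤ b),
        Nat.cast_sub (by nlinarith : 1 ≤ a * b)]
      exact supermul_int a b (by exact_mod_cast h2a) (by exact_mod_cast h2b)
    exact hstep.trans (Nat.mul_le_mul (iha h2a) (ihb h2b))

theorem stmt18 (n : ℕ) (hn : 2 ≤ n) :
    n.totient * dpsi n * sigma1 n ≥ n ^ 3 + n ^ 2 - n - 1 := by
  have heq : n ^ 3 + n ^ 2 - n - 1 = (n + 1) ^ 2 * (n - 1) := by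
    obtain ⟨m, rfl⟩ : ∃ m, n = m + 2 := ⟨n - 2, by omega⟩
    have h2 : m + 2 + 1 = m + 3 := rfl
    have h3 : m + 2 - 1 = m + 1 := rfl
    rw [h2, h3]
    have h1 : (m + 2) ^ 3 + (m + 2) ^ 2 = (m + 3) ^ 2 * (m + 1) + 1 + (m + 2) := by ring
    rw [h1, Nat.add_sub_cancel, Nat.add_sub_cancel]
  rw [heq]
  exact key n hn
end
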